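/- arXiv:2603.15345 — 3 statements merged into one kernel-verified Lean document; each statement's English description precedes it below -/
import Mathlib

section
/- If x ∈ Γ_k^n and for some index j we have s_k(x|j) ≤ 0 (where s_k(x|j) = s_k(x) − x_j s_{k-1}(x|j)), then x_j > 0 and s_{k-1}(x|j)·x_j ≥ s_k(x) > 0; in particular s_{k-1}(x|j)/s_k(x) ≥ 1/x_j. -/
open Finset

/-- The `k`-th elementary symmetric polynomial of `x ∈ ℝⁿ`. -/
noncomputable def esymm (n k : ℕ) (x : Fin n → ℝ) : ℝ :=
  ∑ A ∈ Finset.powersetCard k (Finset.univ : Finset (Fin n)), ∏ i ∈ A, x i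

/-- The Gårding cone `Γₖⁿ = {x : sₗ(x) > 0, l = 1,…,k}`. -/
def GammaK (n k : ℕ) (x : Fin n → ℝ) : Prop :=
  ∀ l, 1 ≤ l → l ≤ k → 0 < esymm n l x

lemma esymm_update_eq (n m : ℕ) (x : Fin n → ℝ) (j : Fin n) :
    esymm n m (Function.update x j 0) =
      ∑ A ∈ Finset.powersetCard m (Finset.univ.erase j), ∏ i ∈ A, x i := by
  unfold esymm
  rw [← Finset.sum_filter_add_sum_filter_not (Finset.powersetCard m Finset.univ)
      (fun A => j ∈ A)]
  have h1 : ∑ A ∈ (Finset.powersetCard m (Finset.univ : Finset (Fin n))).filter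
      (fun A => j ∈ A), ∏ i ∈ A, Function.update x j 0 i = 0 := by
    apply Finset.sum_eq_zero
    intro A hA
    rw [Finset.mem_filter] at hA
    exact Finset.prod_eq_zero hA.2 (by simp)
  have h2 : (Finset.powersetCard m (Finset.univ : Finset (Fin n))).filter
      (fun A => ¬ j ∈ A) = Finset.powersetCard m (Finset.univ.erase j) := by
    ext A
    simp [Finset.mem_powersetCard, Finset.subset_erase, and_comm]
  rw [h1, h2, zero_add]
  apply Finset.sum_congr rfl
  intro A hA
  rw [Finset.mem_powersetCard, Finset.subset_erase] at hA
  refine Finset.prod_congr rfl fun i hi => Function.update_of_ne ?_ _ _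
  rintro rfl
  exact hA.1.2 hi

lemma esymm_split (n m : ℕ) (x : Fin n → ℝ) (j : Fin n) :
    esymm n (m + 1) x =
      esymm n (m + 1) (Function.update x j 0) +
        x j * esymm n m (Function.update x j 0) := by
  rw [esymm_update_eq, esymm_update_eq]
  unfold esymm
  have hj : j ∉ Finset.univ.erase j := Finset.notMem_erase _ _
  have huniv : (Finset.univ : Finset (Fin n)) = insert j (Finset.univ.erase j) := by
    rw [Finset.insert_erase (Finset.mem_univ j)]
  have hps : Finset.powersetCard (m + 1) (Finset.univ : Finset (Fin n)) =
      Finset.powersetCard (m + 1) (Finset.univ.erase j) ∪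
        (Finset.powersetCard m (Finset.univ.erase j)).image (insert j) := by
    conv_lhs => rw [huniv]
    exact Finset.powersetCard_succ_insert hj m
  rw [hps]
  rw [Finset.sum_union]
  · congr 1
    rw [Finset.sum_image]
    · rw [Finset.mul_sum]
      apply Finset.sum_congr rfl
      intro A hA
      rw [Finset.mem_powersetCard, Finset.subset_erase] at hA
      rw [Finset.prod_insert hA.1.2]
    · intro A hA B hB hAB
      rw [Finset.mem_coe, Finset.mem_powersetCard, Finset.subset_erase] at hA hB
      have : (insert j A).erase j = (insert j B).erase j := by rw [hAB]
      rwa [Finset.erase_insert hA.1.2, Finset.erase_insert hB.1.2] at this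
  · rw [Finset.disjoint_left]
    intro A hA hA'
    rw [Finset.mem_powersetCard, Finset.subset_erase] at hA
    rw [Finset.mem_image] at hA'
    obtain ⟨B, _, rfl⟩ := hA'
    exact hA.1.2 (Finset.mem_insert_self j B)

lemma esymm_zero_eq_one (n : ℕ) (x : Fin n → ℝ) : esymm n 0 x = 1 := by
  simp [esymm]

/-- If x ∈ Γₖⁿ and s_k(x|j) ≤ 0 then xⱼ > 0, s_{k-1}(x|j)·xⱼ ≥ s_k(x) > 0, and
s_{k-1}(x|j)/s_k(x) ≥ 1/xⱼ. -/
theorem neg_partial_implies (n k : ℕ) (hk : 1 ≤ k) (x : Fin n → ℝ) (hx : GammaK n k x)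
    (j : Fin n) (hj : esymm n k (Function.update x j 0) ≤ 0) :
    0 < x j ∧
    esymm n (k - 1) (Function.update x j 0) * x j ≥ esymm n k x ∧
    0 < esymm n k x ∧
    esymm n (k - 1) (Function.update x j 0) / esymm n k x ≥ 1 / x j := by
  obtain ⟨m, rfl⟩ : ∃ m, k = m + 1 := ⟨k - 1, (Nat.succ_pred_eq_of_pos hk).symm⟩
  have hm : m + 1 - 1 = m := rfl
  rw [hm]
  have hsk : 0 < esymm n (m + 1) x := hx (m + 1) (Nat.le_add_left 1 m) le_rfl
  have hid := esymm_split n m x j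
  have hprod : 0 < x j * esymm n m (Function.update x j 0) := by linarith
  -- x j > 0 by downward induction
  have hxj : 0 < x j := by
    by_contra h
    push_neg at h
    have hneg : x j < 0 := by
      rcases lt_or_eq_of_le h with h' | h'
      · exact h'
      · rw [h'] at hprod; simp at hprod
    have claim : ∀ l, l ≤ m → esymm n (m - l) (Function.update x j 0) < 0 := by
      intro l
      induction l with
      | zero =>
        intro _
        simpa using (neg_of_mul_pos_right hprod (le_of_lt hneg))
      | succ l ih =>
        intro hl
        have hl' : l ≤ m := le_of_lt (Nat.lt_of_succ_le hl)
        have hprev := ih hl'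
        have hsucc : m - (l + 1) + 1 = m - l := by omega
        have hid' := esymm_split n (m - (l + 1)) x j
        rw [hsucc] at hid'
        have hpos : 0 < esymm n (m - l) x :=
          hx (m - l) (by omega) (by omega)
        have : 0 < x j * esymm n (m - (l + 1)) (Function.update x j 0) := by linarith
        exact neg_of_mul_pos_right this (le_of_lt hneg)
      
    have h0 := claim m le_rfl
    rw [Nat.sub_self, esymm_zero_eq_one] at h0
    linarith
  refine ⟨hxj, by nlinarith, hsk, ?_⟩
  rw [ge_iff_le, div_le_div_iff₀ hxj hsk]
  nlinarith
end

section
/- If x ∈ Γ_k^n and x_j < 0 for some index j, then x|j ∈ Γ_k^n; that is, setting a negative coordinate of a point in the Gårding cone Γ_k^n to zero keeps it in Γ_k^n. -/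
open Finset

lemma esymm_split_s15 (n l : ℕ) (y : Fin n → ℝ) (j : Fin n) :
    esymm n (l + 1) y
      = (∑ A ∈ ((Finset.univ : Finset (Fin n)).erase j).powersetCard (l + 1), ∏ i ∈ A, y i)
        + y j * ∑ A ∈ ((Finset.univ : Finset (Fin n)).erase j).powersetCard l, ∏ i ∈ A, y i := by
  have hj : j ∉ (Finset.univ : Finset (Fin n)).erase j := notMem_erase _ _
  have hju : (Finset.univ : Finset (Fin n)) = insert j (Finset.univ.erase j) :=
    (insert_erase (mem_univ j)).symm
  have hdisj : Disjoint (((Finset.univ : Finset (Fin n)).erase j).powersetCard (l + 1))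
      ((((Finset.univ : Finset (Fin n)).erase j).powersetCard l).image (insert j)) := by
    rw [disjoint_left]
    intro A hA hA'
    rw [mem_powersetCard] at hA
    obtain ⟨B, hB, rfl⟩ := mem_image.mp hA'
    exact hj (hA.1 (mem_insert_self j B))
  conv_lhs => rw [esymm, hju]
  rw [powersetCard_succ_insert hj, sum_union hdisj, sum_image ?_]
  · congr 1
    rw [mul_sum]
    refine sum_congr rfl fun A hA => ?_
    rw [mem_powersetCard] at hA
    rw [prod_insert (fun h => hj (hA.1 h))]
  · intro A hA B hB h
    rw [mem_coe, mem_powersetCard] at hA hB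
    have hjA : j ∉ A := fun h' => hj (hA.1 h')
    have hjB : j ∉ B := fun h' => hj (hB.1 h')
    rw [← erase_insert hjA, ← erase_insert hjB, h]

lemma prod_update_eq (n : ℕ) (x : Fin n → ℝ) (j : Fin n) (A : Finset (Fin n))
    (hA : A ⊆ Finset.univ.erase j) :
    ∏ i ∈ A, Function.update x j 0 i = ∏ i ∈ A, x i := by
  refine prod_congr rfl fun i hi => ?_
  exact Function.update_of_ne (ne_of_mem_erase (hA hi)) _ _

/-- Setting a negative coordinate of x ∈ Γₖⁿ to zero keeps it in Γₖⁿ. -/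
theorem update_neg_mem_GammaK (n k : ℕ) (x : Fin n → ℝ) (hx : GammaK n k x)
    (j : Fin n) (hj : x j < 0) :
    GammaK n k (Function.update x j 0) := by
  set S : ℕ → ℝ := fun m => ∑ A ∈ ((Finset.univ : Finset (Fin n)).erase j).powersetCard m,
    ∏ i ∈ A, x i with hS
  have hSupd : ∀ m, (∑ A ∈ ((Finset.univ : Finset (Fin n)).erase j).powersetCard m,
      ∏ i ∈ A, Function.update x j 0 i) = S m := by
    intro m
    refine sum_congr rfl fun A hA => ?_
    exact prod_update_eq n x j A (mem_powersetCard.mp hA).1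
  have hupd : ∀ m, esymm n (m + 1) (Function.update x j 0) = S m.succ := by
    intro m
    rw [esymm_split_s15 n m (Function.update x j 0) j, Function.update_self, zero_mul, add_zero,
      hSupd]
  have hx_split : ∀ m, esymm n (m + 1) x = S (m + 1) + x j * S m := fun m =>
    esymm_split_s15 n m x j
  have hSpos : ∀ m, m ≤ k → 0 < S m := by
    intro m
    induction m with
    | zero =>
      intro _
      simp [hS]
    | succ m ih =>
      intro hmk
      have h1 : 0 < esymm n (m + 1) x := hx (m + 1) (Nat.succ_le_succ (Nat.zero_le _)) hmk
      have h2 : 0 < S m := ih (Nat.le_of_succ_le hmk)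
      have := hx_split m
      nlinarith
  intro l hl1 hlk
  obtain ⟨m, rfl⟩ := Nat.exists_eq_add_of_le hl1
  rw [Nat.add_comm, hupd m]
  exact hSpos (m + 1) (by omega)
end

section
/- Let (λ, y) ∈ Γ_{n-1}^{n+m} with λ_1 ≥ λ_2 ≥ ... ≥ λ_n, where y = (y_1,...,y_m) with Σ y_i = a_1 ≥ 0. If λ_n < −λ_1/(n−1), then λ_{n-1} > λ_1/(n−1) − a_1; in particular λ_{n-1} > 0 once λ_1 > (n−1)·a_1. -/
open Finset

namespace GardingAux

open Polynomial

/-- The monic polynomial with prescribed real root multiset. -/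
noncomputable def P (s : Multiset ℝ) : Polynomial ℝ := (s.map fun r => X - C r).prod

lemma P_cons (a : ℝ) (s : Multiset ℝ) : P (a ::ₘ s) = (X - C a) * P s := by
  simp [P, Multiset.map_cons, Multiset.prod_cons]

lemma P_eval_pos {s : Multiset ℝ} {y : ℝ} (h : ∀ r ∈ s, r < y) : 0 < (P s).eval y := by
  induction s using Multiset.induction_on with
  | empty => simp [P]
  | cons a s ih =>
    rw [P_cons, eval_mul, eval_sub, eval_X, eval_C]
    have ha := h a (Multiset.mem_cons_self a s)
    exact mul_pos (by linarith) (ih fun r hr => h r (Multiset.mem_cons_of_mem hr))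

lemma P_deriv_nonneg {s : Multiset ℝ} {y : ℝ} (h : ∀ r ∈ s, r < y) :
    0 ≤ ((P s).derivative).eval y := by
  induction s using Multiset.induction_on with
  | empty => simp [P]
  | cons a s ih =>
    rw [P_cons, derivative_mul, derivative_X_sub_C, one_mul, eval_add, eval_mul,
      eval_sub, eval_X, eval_C]
    have ha := h a (Multiset.mem_cons_self a s)
    have h1 := P_eval_pos (fun r hr => h r (Multiset.mem_cons_of_mem hr))
    have h2 := ih fun r hr => h r (Multiset.mem_cons_of_mem hr)
    nlinarith

lemma P_deriv_pos {s : Multiset ℝ} (hs : s ≠ 0) {y : ℝ} (h : ∀ r ∈ s, r < y) :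
    0 < ((P s).derivative).eval y := by
  obtain ⟨a, ha⟩ := Multiset.exists_mem_of_ne_zero hs
  obtain ⟨t, rfl⟩ := Multiset.exists_cons_of_mem ha
  rw [P_cons, derivative_mul, derivative_X_sub_C, one_mul, eval_add, eval_mul,
    eval_sub, eval_X, eval_C]
  have ha := h _ (Multiset.mem_cons_self _ t)
  have h1 := P_eval_pos (fun r hr => h r (Multiset.mem_cons_of_mem hr))
  have h2 := P_deriv_nonneg (fun r hr => h r (Multiset.mem_cons_of_mem hr))
  nlinarith

/-- "Real rooted with positive leading coefficient". -/
def RRp (p : Polynomial ℝ) : Prop :=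
  0 < p.leadingCoeff ∧ Multiset.card p.roots = p.natDegree

lemma RRp.ne_zero {p : Polynomial ℝ} (hp : RRp p) : p ≠ 0 :=
  fun h => by simp [h] at hp; exact lt_irrefl _ hp.1

lemma RRp.factor {p : Polynomial ℝ} (hp : RRp p) :
    p = C p.leadingCoeff * P p.roots :=
  (C_leadingCoeff_mul_prod_multiset_X_sub_C hp.2).symm

lemma RRp.eval_pos {p : Polynomial ℝ} (hp : RRp p) {y : ℝ}
    (h : ∀ r ∈ p.roots, r < y) : 0 < p.eval y := by
  have h2 : p.eval y = p.leadingCoeff * (P p.roots).eval y := by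
    nth_rewrite 1 [hp.factor]; rw [eval_mul, eval_C]
  rw [h2]
  exact mul_pos hp.1 (P_eval_pos h)

lemma RRp.deriv_eval_pos {p : Polynomial ℝ} (hp : RRp p) (hd : 0 < p.natDegree) {y : ℝ}
    (h : ∀ r ∈ p.roots, r < y) : 0 < p.derivative.eval y := by
  have hroots : p.roots ≠ 0 := by
    intro h0
    have := hp.2
    rw [h0] at this
    simp at this
    omega
  have h2 : p.derivative = C p.leadingCoeff * (P p.roots).derivative := by
    nth_rewrite 1 [hp.factor]; rw [derivative_C_mul]
  rw [h2, eval_mul, eval_C]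
  exact mul_pos hp.1 (P_deriv_pos hroots h)

lemma RRp.derivative {p : Polynomial ℝ} (hp : RRp p) (hd : 0 < p.natDegree) :
    RRp (Polynomial.derivative p) ∧ (Polynomial.derivative p).natDegree = p.natDegree - 1 := by
  have hd1 : p.natDegree - 1 + 1 = p.natDegree := by omega
  have hdpos : (0:ℝ) < ((p.natDegree - 1 : ℕ) : ℝ) + 1 := by positivity
  have hco : (Polynomial.derivative p).coeff (p.natDegree - 1)
      = p.leadingCoeff * (((p.natDegree - 1 : ℕ) : ℝ) + 1) := by
    rw [coeff_derivative, hd1, Polynomial.coeff_natDegree]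
  have hcne : (Polynomial.derivative p).coeff (p.natDegree - 1) ≠ 0 := by
    rw [hco]; exact ne_of_gt (mul_pos hp.1 hdpos)
  have hdeg : (Polynomial.derivative p).natDegree = p.natDegree - 1 :=
    le_antisymm (natDegree_derivative_le p) (le_natDegree_of_ne_zero hcne)
  have hlcpos : 0 < (Polynomial.derivative p).leadingCoeff := by
    rw [Polynomial.leadingCoeff, hdeg, hco]
    exact mul_pos hp.1 hdpos
  have hcard : Multiset.card (Polynomial.derivative p).roots = p.natDegree - 1 := by
    have h1 := Polynomial.card_roots_le_derivative p
    have h2 := Polynomial.card_roots' (Polynomial.derivative p)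
    rw [hdeg] at h2
    rw [hp.2] at h1
    omega
  exact ⟨⟨hlcpos, by rw [hcard, hdeg]⟩, hdeg⟩

lemma RRp.iterate {p : Polynomial ℝ} (hp : RRp p) :
    ∀ j ≤ p.natDegree, RRp (Polynomial.derivative^[j] p) ∧
      (Polynomial.derivative^[j] p).natDegree = p.natDegree - j := by
  intro j
  induction j with
  | zero => intro _; simpa using hp
  | succ j ih =>
    intro hj
    have h1 := ih (by omega)
    have hd : 0 < (Polynomial.derivative^[j] p).natDegree := by omega
    rw [Function.iterate_succ_apply']
    obtain ⟨h2, h3⟩ := h1.1.derivative hd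
    exact ⟨h2, by omega⟩

/-- existence of a maximal root -/
lemma RRp.max_root {p : Polynomial ℝ} (hp : RRp p) (hd : 0 < p.natDegree) :
    ∃ b ∈ p.roots, ∀ r ∈ p.roots, r ≤ b := by
  have hne : p.roots ≠ 0 := by
    intro h0
    have := hp.2
    rw [h0] at this
    simp at this
    omega
  have hTne : p.roots.toFinset.Nonempty := by
    obtain ⟨a, ha⟩ := Multiset.exists_mem_of_ne_zero hne
    exact ⟨a, Multiset.mem_toFinset.2 ha⟩
  refine ⟨p.roots.toFinset.max' hTne, Multiset.mem_toFinset.1 (Finset.max'_mem _ _), ?_⟩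
  intro r hr
  exact Finset.le_max' _ _ (Multiset.mem_toFinset.2 hr)


lemma leibniz (r : ℝ) (p : Polynomial ℝ) (j : ℕ) :
    Polynomial.derivative^[j+1] ((X - C r) * p)
      = (X - C r) * Polynomial.derivative^[j+1] p
        + C (((j+1 : ℕ) : ℝ)) * Polynomial.derivative^[j] p := by
  induction j with
  | zero =>
    simp only [zero_add, Function.iterate_one, Function.iterate_zero, id_eq, derivative_mul,
      derivative_X_sub_C, Nat.cast_one, C_1]
    ring
  | succ j ih =>
    rw [Function.iterate_succ_apply', ih, derivative_add, derivative_mul, derivative_X_sub_C,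
      derivative_C_mul,
      ← Function.iterate_succ_apply' Polynomial.derivative (j+1) p,
      ← Function.iterate_succ_apply' Polynomial.derivative j p]
    have hc : (((j+1)+1 : ℕ) : ℝ) = ((j+1 : ℕ) : ℝ) + 1 := by push_cast; ring
    rw [hc, map_add, C_1]
    ring

lemma main {g : Polynomial ℝ} (hg : RRp g) (r : ℝ) {j : ℕ} (hj1 : 1 ≤ j)
    (hjd : j + 1 ≤ g.natDegree) {c : ℝ}
    (hF : ∀ ρ ∈ (Polynomial.derivative^[j] ((X - C r) * g)).roots, ρ < c) :
    ∀ ρ ∈ (Polynomial.derivative^[j] g).roots, ρ < c := by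
  by_contra hcon
  push_neg at hcon
  obtain ⟨ρ₀, hρ₀mem, hρ₀⟩ := hcon
  have hgne : g ≠ 0 := hg.ne_zero
  have hXne : (X - C r : Polynomial ℝ) ≠ 0 := X_sub_C_ne_zero r
  have hfne : (X - C r) * g ≠ 0 := mul_ne_zero hXne hgne
  have hfdeg : ((X - C r) * g).natDegree = g.natDegree + 1 := by
    rw [natDegree_mul hXne hgne, natDegree_X_sub_C]; omega
  have hflc : ((X - C r) * g).leadingCoeff = g.leadingCoeff := by
    rw [leadingCoeff_mul, (monic_X_sub_C r).leadingCoeff, one_mul]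
  have hfroots : ((X - C r) * g).roots = r ::ₘ g.roots := by
    rw [roots_mul hfne, roots_X_sub_C, Multiset.singleton_add]
  have hfR : RRp ((X - C r) * g) := ⟨by rw [hflc]; exact hg.1, by
    rw [hfroots, hfdeg, Multiset.card_cons, hg.2]⟩
  obtain ⟨hFR, hFdeg⟩ := hfR.iterate j (by rw [hfdeg]; omega)
  obtain ⟨hBR, hBdeg⟩ := hg.iterate j (by omega)
  obtain ⟨hAR, hAdeg⟩ := hg.iterate (j-1) (by omega)
  set A := Polynomial.derivative^[j-1] g with hA
  set B := Polynomial.derivative^[j] g with hB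
  set F := Polynomial.derivative^[j] ((X - C r) * g) with hFdef
  have hjj : j - 1 + 1 = j := by omega
  have hAB : Polynomial.derivative A = B := by
    rw [hA, hB]
    conv_rhs => rw [← hjj]
    rw [Function.iterate_succ_apply']
  have hLB : F = (X - C r) * B + C ((j : ℕ) : ℝ) * A := by
    have h := leibniz r g (j-1)
    rw [hjj] at h
    exact h
  obtain ⟨s, hsmem, hsmax⟩ := hBR.max_root (by omega)
  have hcs : c ≤ s := le_trans hρ₀ (hsmax _ hρ₀mem)
  have hFs : 0 < F.eval s := hFR.eval_pos (fun ρ hρ => lt_of_lt_of_le (hF ρ hρ) hcs)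
  have hBs : B.eval s = 0 := Polynomial.isRoot_of_mem_roots hsmem
  have hjR : (0:ℝ) < (j : ℝ) := by exact_mod_cast hj1
  have hAs : 0 < A.eval s := by
    rw [hLB, eval_add, eval_mul, eval_mul, eval_C, hBs, mul_zero, zero_add] at hFs
    nlinarith
  obtain ⟨b, hbmem, hbmax⟩ := hAR.max_root (by omega)
  have hAb : A.eval b = 0 := Polynomial.isRoot_of_mem_roots hbmem
  rcases lt_trichotomy b s with hbs | hbs | hbs
  · have hpos : 0 < (Polynomial.derivative A).eval s :=
      hAR.deriv_eval_pos (by omega) (fun ρ hρ => lt_of_le_of_lt (hbmax ρ hρ) hbs)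
    rw [hAB, hBs] at hpos
    exact lt_irrefl _ hpos
  · rw [hbs] at hAb
    rw [hAb] at hAs
    exact lt_irrefl _ hAs
  · have hmono : StrictMonoOn (fun x => A.eval x) (Set.Ici s) := by
      apply strictMonoOn_of_deriv_pos (convex_Ici s) A.continuousOn
      intro x hx
      rw [interior_Ici] at hx
      rw [Polynomial.deriv, hAB]
      exact hBR.eval_pos (fun ρ hρ => lt_of_le_of_lt (hsmax ρ hρ) hx)
    have hlt : A.eval s < A.eval b :=
      hmono Set.self_mem_Ici (Set.mem_Ici.2 (le_of_lt hbs)) hbs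
    rw [hAb] at hlt
    linarith

lemma P_monic (s : Multiset ℝ) : (P s).Monic :=
  monic_multiset_prod_of_monic _ _ fun a _ => monic_X_sub_C a

lemma P_natDegree (s : Multiset ℝ) : (P s).natDegree = Multiset.card s :=
  natDegree_multiset_prod_X_sub_C_eq_card s

lemma P_roots (s : Multiset ℝ) : (P s).roots = s :=
  roots_multiset_prod_X_sub_C s

lemma P_RRp (s : Multiset ℝ) : RRp (P s) :=
  ⟨by rw [(P_monic s).leadingCoeff]; exact one_pos, by rw [P_roots, P_natDegree]⟩

lemma P_neg_eq (Z : Multiset ℝ) :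
    P (Z.map fun b => -b) = (Z.map fun b => X + C b).prod := by
  rw [P, Multiset.map_map]
  apply congrArg
  apply Multiset.map_congr rfl
  intro b _
  simp [Function.comp_apply, sub_neg_eq_add]

lemma coeff_pos_roots_neg {p : Polynomial ℝ} (h0 : 0 < p.coeff 0)
    (h : ∀ i, 0 ≤ p.coeff i) : ∀ ρ ∈ p.roots, ρ < 0 := by
  intro ρ hρ
  by_contra hneg
  push_neg at hneg
  have hpne : p ≠ 0 := fun hh => by rw [hh] at h0; simp at h0
  have heval : p.eval ρ = 0 := isRoot_of_mem_roots hρ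
  have hpos : 0 < p.eval ρ := by
    rw [eval_eq_sum_range]
    apply Finset.sum_pos'
    · intro i _
      exact mul_nonneg (h i) (pow_nonneg hneg i)
    · exact ⟨0, Finset.mem_range.2 (Nat.succ_pos _), by simpa using h0⟩
  linarith

lemma esymm_pos {u : Multiset ℝ} (hu : ∀ x ∈ u, 0 < x) {l : ℕ} (hl : l ≤ Multiset.card u) :
    0 < u.esymm l := by
  rw [Multiset.esymm]
  have hchoose : 0 < (Multiset.card u).choose l := Nat.choose_pos hl
  have hcardp : Multiset.card (u.powersetCard l) = (Multiset.card u).choose l :=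
    Multiset.card_powersetCard l u
  have hne : u.powersetCard l ≠ 0 := by
    intro hh
    rw [hh] at hcardp
    simp at hcardp
    omega
  obtain ⟨t, ht⟩ := Multiset.exists_mem_of_ne_zero hne
  have hprodpos : ∀ x ∈ Multiset.map Multiset.prod (u.powersetCard l), 0 < x := by
    intro x hx
    obtain ⟨t', ht', rfl⟩ := Multiset.mem_map.1 hx
    exact Multiset.prod_pos fun b hb =>
      hu b (Multiset.mem_of_le (Multiset.mem_powersetCard.1 ht').1 hb)
  have h1 : 0 < t.prod := hprodpos _ (Multiset.mem_map_of_mem _ ht)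
  have h2 : t.prod ≤ (Multiset.map Multiset.prod (u.powersetCard l)).sum :=
    Multiset.single_le_sum (fun x hx => le_of_lt (hprodpos x hx)) _
      (Multiset.mem_map_of_mem _ ht)
  linarith

lemma descFactorial_pos : ∀ (j m : ℕ), 0 < (m + j).descFactorial j
  | 0, m => by simp
  | j+1, m => by
    rw [Nat.descFactorial_succ]
    have h1 : m + (j + 1) - j = m + 1 := by omega
    have h2 : m + (j + 1) = (m + 1) + j := by omega
    rw [h1, h2]
    exact Nat.mul_pos (by omega) (descFactorial_pos j (m+1))

lemma esymm_zero' (s : Multiset ℝ) : s.esymm 0 = 1 := by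
  simp [Multiset.esymm, Multiset.powersetCard_zero_left]

/-- Removing one entry from a Γ_k vector lands in Γ_{k-1}. -/
lemma step {k : ℕ} (hk : 2 ≤ k) {Z : Multiset ℝ} (hcard : k ≤ Multiset.card Z) {a : ℝ}
    (haZ : a ∈ Z) (hG : ∀ l, 1 ≤ l → l ≤ k → 0 < Z.esymm l) :
    ∀ l, 1 ≤ l → l ≤ k - 1 → 0 < (Z.erase a).esymm l := by
  intro l hl1 hl2
  set D := Multiset.card Z with hD
  have hcardE : Multiset.card (Z.erase a) = D - 1 := by
    rw [Multiset.card_erase_of_mem haZ, Nat.pred_eq_sub_one, ← hD]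
  set t : Multiset ℝ := (Z.erase a).map (fun b => -b) with ht
  have hcardt : Multiset.card t = D - 1 := by rw [ht, Multiset.card_map, hcardE]
  set j := D - k with hj
  -- the full polynomial and its iterated derivative
  have hfD : (P (Z.map fun b => -b)).natDegree = D := by
    rw [P_natDegree, Multiset.card_map]
  have hfcoeff : ∀ i, i ≤ D → (P (Z.map fun b => -b)).coeff i = Z.esymm (D - i) := by
    intro i hi
    rw [P_neg_eq, Multiset.prod_X_add_C_coeff Z hi]
  -- the iterated derivative of the full polynomial has positive constant and nonneg coeffs
  set F := Polynomial.derivative^[j] (P (Z.map fun b => -b)) with hF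
  have hFcoeff : ∀ i, F.coeff i
      = ((i + j).descFactorial j : ℝ) * (P (Z.map fun b => -b)).coeff (i + j) := by
    intro i
    rw [hF, Polynomial.coeff_iterate_derivative, nsmul_eq_mul]
  have hFcoeff_nonneg : ∀ i, 0 ≤ F.coeff i := by
    intro i
    rw [hFcoeff i]
    apply mul_nonneg (by positivity)
    rcases le_or_gt (i + j) D with hiD | hiD
    · rw [hfcoeff _ hiD]
      rcases Nat.eq_zero_or_pos (D - (i + j)) with h0 | h0
      · rw [h0, esymm_zero']
        norm_num
      · exact le_of_lt (hG _ h0 (by omega))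
    · rw [coeff_eq_zero_of_natDegree_lt (by omega : (P (Z.map fun b => -b)).natDegree < i + j)]
  have hFcoeff0 : 0 < F.coeff 0 := by
    rw [hFcoeff 0]
    apply mul_pos
    · exact_mod_cast descFactorial_pos j 0
    · have hjD : 0 + j ≤ D := by omega
      rw [hfcoeff _ hjD]
      exact hG _ (by omega) (by omega)
  have hFroots : ∀ ρ ∈ F.roots, ρ < 0 := coeff_pos_roots_neg hFcoeff0 hFcoeff_nonneg
  -- pass to the polynomial with the entry removed
  have hZcons : Z.map (fun b : ℝ => -b) = (-a) ::ₘ t := by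
    rw [ht, ← Multiset.map_cons, Multiset.cons_erase haZ]
  have hsplit : P (Z.map fun b => -b) = (X - C (-a)) * P t := by
    rw [hZcons, P_cons]
  have hGroots : ∀ ρ ∈ (Polynomial.derivative^[j] (P t)).roots, ρ < 0 := by
    rcases Nat.eq_zero_or_pos j with hj0 | hj0
    · rw [hj0]
      simp only [Function.iterate_zero, id_eq, P_roots]
      intro ρ hρ
      apply hFroots
      rw [hF, hj0]
      simp only [Function.iterate_zero, id_eq, P_roots]
      rw [hZcons]
      exact Multiset.mem_cons_of_mem hρ
    · apply main (P_RRp t) (-a) hj0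
      · rw [P_natDegree, hcardt]
        omega
      · rw [← hsplit, ← hF]
        exact hFroots
  -- the resulting polynomial has positive coefficients
  set G := Polynomial.derivative^[j] (P t) with hGdef
  obtain ⟨hGR, hGdeg⟩ := (P_RRp t).iterate j (by rw [P_natDegree, hcardt]; omega)
  rw [← hGdef] at hGR hGdeg
  rw [P_natDegree, hcardt] at hGdeg
  have hGdeg' : G.natDegree = k - 1 := by omega
  set u : Multiset ℝ := G.roots.map (fun b => -b) with hu
  have hupos : ∀ x ∈ u, 0 < x := by
    intro x hx
    obtain ⟨ρ, hρ, rfl⟩ := Multiset.mem_map.1 hx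
    have := hGroots ρ hρ
    linarith
  have hucard : Multiset.card u = k - 1 := by
    rw [hu, Multiset.card_map, hGR.2, hGdeg']
  have huneg : u.map (fun b : ℝ => -b) = G.roots := by
    rw [hu, Multiset.map_map]
    simp
  -- compare the two coefficient formulas
  set i := k - 1 - l with hi
  have hik : i ≤ k - 1 := by omega
  have hij : i + j ≤ D - 1 := by omega
  have hcoeffG1 : G.coeff i = G.leadingCoeff * u.esymm l := by
    nth_rewrite 1 [hGR.factor]
    rw [← huneg, P_neg_eq, coeff_C_mul, Multiset.prod_X_add_C_coeff u (by omega)]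
    congr 2
    omega
  have hcoeffG2 : G.coeff i = ((i + j).descFactorial j : ℝ) * (Z.erase a).esymm l := by
    rw [hGdef, Polynomial.coeff_iterate_derivative, nsmul_eq_mul]
    congr 1
    have : (P t).coeff (i + j) = (Z.erase a).esymm (Multiset.card (Z.erase a) - (i + j)) := by
      rw [ht, P_neg_eq, Multiset.prod_X_add_C_coeff (Z.erase a) (by omega)]
    rw [this]
    congr 1
    omega
  have hdF : (0:ℝ) < ((i + j).descFactorial j : ℝ) := by
    exact_mod_cast descFactorial_pos j i
  have hpos : 0 < G.leadingCoeff * u.esymm l :=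
    mul_pos hGR.1 (esymm_pos hupos (by omega))
  rw [hcoeffG1] at hcoeffG2
  nlinarith

/-- In Γ_k, the sum of the entries remaining after removing any k-1 of them is positive. -/
lemma sum_pos_of_gamma : ∀ (k : ℕ), 1 ≤ k → ∀ (Z W : Multiset ℝ), k ≤ Multiset.card Z →
    W ≤ Z → Multiset.card W = k - 1 →
    (∀ l, 1 ≤ l → l ≤ k → 0 < Z.esymm l) → 0 < (Z - W).sum := by
  intro k
  induction k with
  | zero => omega
  | succ k ih =>
    intro _ Z W hcard hWZ hWcard hG
    rcases Nat.eq_zero_or_pos k with hk0 | hk0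
    · have hW0 : W = 0 := by
        rw [← Multiset.card_eq_zero]
        omega
      rw [hW0, Multiset.sub_zero]
      have h1 := hG 1 le_rfl (by omega)
      rw [Multiset.esymm, Multiset.powersetCard_one, Multiset.map_map] at h1
      simpa using h1
    · have hWne : W ≠ 0 := by
        intro h
        rw [h] at hWcard
        simp at hWcard
        omega
      obtain ⟨a, haW⟩ := Multiset.exists_mem_of_ne_zero hWne
      have haZ : a ∈ Z := Multiset.mem_of_le hWZ haW
      have hstep := step (by omega) hcard haZ hG
      have hcZ : Multiset.card (Z.erase a) = Multiset.card Z - 1 := by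
        rw [Multiset.card_erase_of_mem haZ, Nat.pred_eq_sub_one]
      have hcW : Multiset.card (W.erase a) = Multiset.card W - 1 := by
        rw [Multiset.card_erase_of_mem haW, Nat.pred_eq_sub_one]
      have hZW : Z.erase a - W.erase a = Z - W := by
        have h1 : a ::ₘ (W.erase a) = W := Multiset.cons_erase haW
        have h2 : a ::ₘ (Z.erase a) = Z := Multiset.cons_erase haZ
        conv_rhs => rw [← h2, ← h1, ← Multiset.singleton_add, ← Multiset.singleton_add]
        exact (add_tsub_add_eq_tsub_left _ _ _).symm
      have := ih hk0 (Z.erase a) (W.erase a) (by omega)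
        (Multiset.erase_le_erase a hWZ) (by omega)
        (fun l h1 h2 => hstep l h1 (by omega))
      rwa [hZW] at this

end GardingAux

/-- If (λ, y) ∈ Γ_{n-1}^{n+m}, λ decreasing, Σ yᵢ = a₁ ≥ 0, and λₙ < −λ₁/(n−1),
then λ_{n-1} > λ₁/(n−1) − a₁; in particular λ_{n-1} > 0 once λ₁ > (n−1)a₁. -/
theorem second_smallest_positive (n m : ℕ) (hn : 2 ≤ n)
    (lam : Fin n → ℝ) (y : Fin m → ℝ) (hmono : Antitone lam)
    (hG : GammaK (n + m) (n - 1) (Fin.append lam y))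
    (a1 : ℝ) (ha : (∑ i : Fin m, y i) = a1) (ha1 : 0 ≤ a1)
    (hln : lam ⟨n - 1, by omega⟩ < -(lam ⟨0, by omega⟩ / ((n : ℝ) - 1))) :
    lam ⟨n - 2, by omega⟩ > lam ⟨0, by omega⟩ / ((n : ℝ) - 1) - a1 ∧
      (lam ⟨0, by omega⟩ > ((n : ℝ) - 1) * a1 → 0 < lam ⟨n - 2, by omega⟩) := by
  classical
  have hn1 : (0:ℝ) < (n:ℝ) - 1 := by
    have h2 : (2:ℝ) ≤ (n:ℝ) := by exact_mod_cast hn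
    linarith
  set z : Fin (n+m) → ℝ := Fin.append lam y with hz
  set Z : Multiset ℝ := Multiset.map z (Finset.univ : Finset (Fin (n+m))).val with hZ
  have hGZ : ∀ l, 1 ≤ l → l ≤ n - 1 → 0 < Z.esymm l := by
    intro l h1 h2
    have h3 := hG l h1 h2
    have h4 : esymm (n+m) l z = Z.esymm l := by
      rw [hZ, Finset.esymm_map_val]
      rfl
    rw [← h4]
    exact h3
  set T : Finset (Fin (n+m)) := Finset.univ.filter (fun i => (i : ℕ) < n - 2) with hT
  set T' : Finset (Fin (n+m)) := Finset.univ.filter (fun i => ¬ (i : ℕ) < n - 2) with hT'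
  set W : Multiset ℝ := Multiset.map z T.val with hW
  have hWle : W ≤ Z := Multiset.map_le_map (Finset.val_le_iff.2 (Finset.filter_subset _ _))
  have hZcard : Multiset.card Z = n + m := by
    rw [hZ, Multiset.card_map]
    simp
  have hTcard : T.card = n - 2 := by
    have himg : T.image Fin.val = Finset.range (n-2) := by
      ext i
      simp only [Finset.mem_image, Finset.mem_range, hT, Finset.mem_filter, Finset.mem_univ,
        true_and]
      constructor
      · rintro ⟨a, h1, rfl⟩
        exact h1
      · intro hi
        exact ⟨⟨i, by omega⟩, hi, rfl⟩
    have h5 := Finset.card_image_of_injective T Fin.val_injective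
    rw [himg, Finset.card_range] at h5
    omega
  have hWcard : Multiset.card W = n - 2 := by
    rw [hW, Multiset.card_map]
    exact hTcard
  have hsplit : Z = W + Multiset.map z T'.val := by
    rw [hZ, hW, ← Multiset.map_add]
    congr 1
    rw [hT, hT', Finset.filter_val, Finset.filter_val]
    exact (Multiset.filter_add_not _ _).symm
  have hZWsum : (Z - W).sum = ∑ i ∈ T', z i := by
    rw [hsplit, add_tsub_cancel_left, Finset.sum]
  have hsum2 : ∑ i ∈ T', z i
      = lam ⟨n - 2, by omega⟩ + lam ⟨n - 1, by omega⟩ + a1 := by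
    rw [hT', Finset.sum_filter, Fin.sum_univ_add]
    have hleft : ∀ i : Fin n,
        (if ¬ ((Fin.castAdd m i : Fin (n+m)) : ℕ) < n - 2 then z (Fin.castAdd m i) else 0)
          = (if ¬ (i : ℕ) < n - 2 then lam i else 0) := by
      intro i
      rw [Fin.coe_castAdd, hz, Fin.append_left]
    have hright : ∀ i : Fin m,
        (if ¬ ((Fin.natAdd n i : Fin (n+m)) : ℕ) < n - 2 then z (Fin.natAdd n i) else 0)
          = y i := by
      intro i
      rw [if_pos, hz, Fin.append_right]
      rw [Fin.coe_natAdd]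
      omega
    rw [Finset.sum_congr rfl (fun i _ => hleft i), Finset.sum_congr rfl (fun i _ => hright i), ha]
    have hpair : ∑ i : Fin n, (if ¬ (i : ℕ) < n - 2 then lam i else 0)
        = lam ⟨n - 2, by omega⟩ + lam ⟨n - 1, by omega⟩ := by
      rw [← Finset.sum_filter]
      have hset : (Finset.univ.filter (fun i : Fin n => ¬ (i : ℕ) < n - 2))
          = {(⟨n - 2, by omega⟩ : Fin n), ⟨n - 1, by omega⟩} := by
        ext i
        have hi := i.isLt
        simp only [Finset.mem_filter, Finset.mem_univ, true_and, Finset.mem_insert,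
          Finset.mem_singleton, Fin.ext_iff]
        constructor
        · intro h
          omega
        · intro h
          omega
      rw [hset]
      rw [Finset.sum_pair (by simp only [ne_eq, Fin.ext_iff]; omega)]
    rw [hpair]
  have hS : 0 < lam ⟨n - 2, by omega⟩ + lam ⟨n - 1, by omega⟩ + a1 := by
    have h6 := GardingAux.sum_pos_of_gamma (n-1) (by omega) Z W (by omega) hWle (by omega) hGZ
    rwa [hZWsum, hsum2] at h6
  have hfirst : lam ⟨n - 2, by omega⟩ > lam ⟨0, by omega⟩ / ((n : ℝ) - 1) - a1 := by
    have h7 : -(lam ⟨n - 1, by omega⟩) > lam ⟨0, by omega⟩ / ((n : ℝ) - 1) := by linarith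
    linarith
  refine ⟨hfirst, fun h8 => ?_⟩
  have h9 : a1 < lam ⟨0, by omega⟩ / ((n : ℝ) - 1) := (lt_div_iff₀ hn1).2 (by linarith)
  linarith
end
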